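/- For the S14 braid matrix R̂, the matrices P₀ = (1-q²)⁻¹(R̂-qI)(R̂+qI), P₊ = (2q(q-1))⁻¹(R̂+qI)(R̂-I), P₋ = (2q(q+1))⁻¹(R̂-qI)(R̂-I) are given explicitly by P₀ = diag-block matrix with rows (0,0,0,0),(0,1,0,0),(0,0,1,0),(0,0,0,0); P₊ = (1/2)·[[1,0,0,1],[0,0,0,0],[0,0,0,0],[1,0,0,1]]; P₋ = (1/2)·[[1,0,0,-1],[0,0,0,0],[0,0,0,0],[-1,0,0,1]]; in particular they are independent of q. -/
import Mathlib
set_option maxHeartbeats 1000000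


open Matrix

theorem S14_projectors_explicit (q : ℂ) (hq0 : q ≠ 0) (hq1 : q ≠ 1) (hqm1 : q ≠ -1) :
    let Rhat : Matrix (Fin 4) (Fin 4) ℂ :=
      !![0,0,0,q; 0,1,0,0; 0,0,1,0; q,0,0,0]
    let I1 : Matrix (Fin 4) (Fin 4) ℂ := 1
    (1 - q ^ 2)⁻¹ • ((Rhat - q • I1) * (Rhat + q • I1))
        = !![0,0,0,0; 0,1,0,0; 0,0,1,0; 0,0,0,0] ∧
    (2 * q * (q - 1))⁻¹ • ((Rhat + q • I1) * (Rhat - I1))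
        = (1/2 : ℂ) • !![1,0,0,1; 0,0,0,0; 0,0,0,0; 1,0,0,1] ∧
    (2 * q * (q + 1))⁻¹ • ((Rhat - q • I1) * (Rhat - I1))
        = (1/2 : ℂ) • !![1,0,0,-1; 0,0,0,0; 0,0,0,0; -1,0,0,1] := by
  intro Rhat I1
  have ha : q - 1 ≠ 0 := sub_ne_zero.mpr hq1
  have hb : q + 1 ≠ 0 := fun h => hqm1 (by linear_combination h)
  have h1 : (1:ℂ) - q ^ 2 ≠ 0 := fun h => by
    have : -((q-1)*(q+1)) = 0 := by linear_combination h
    simp [mul_eq_zero, ha, hb] at this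
  refine ⟨?_, ?_, ?_⟩ <;>
  · ext i j
    fin_cases i <;> fin_cases j <;>
      simp [Rhat, I1, Matrix.mul_apply, Fin.sum_univ_four, Matrix.one_apply,
        Matrix.vecHead, Matrix.vecTail] <;>
      field_simp <;> ring
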